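/- Let A be the (n+1)×(n+1) real matrix with A₀₀ = -D - Σᵢ aᵢ, A₀ᵢ = cᵢ, Aᵢ₀ = aᵢ, Aᵢᵢ = -bᵢ for i = 1..n, and all other entries zero. If D > 0, aᵢ ≥ 0, bᵢ > 0 and cᵢ ≤ bᵢ for all i, then every eigenvalue of A has strictly negative real part. -/

import Mathlib

open Matrix

lemma key_re_bound (z : ℂ) (a b c : ℝ) (hz : 0 ≤ z.re) (ha : 0 ≤ a) (hb : 0 < b)
    (hc : c ≤ b) : ((c : ℂ) * a / (z + b)).re ≤ a := by
  have hwre : (z + (b : ℂ)).re = z.re + b := by simp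
  have hwre' : 0 < (z + (b : ℂ)).re := by rw [hwre]; linarith
  have hns : 0 < Complex.normSq (z + (b : ℂ)) := by
    apply Complex.normSq_pos.2
    intro h
    rw [h] at hwre'; simp at hwre'
  have hns' : (z + (b : ℂ)).re ^ 2 ≤ Complex.normSq (z + (b : ℂ)) := by
    rw [Complex.normSq_apply]; nlinarith [sq_nonneg (z + (b:ℂ)).im]
  have him : ((c : ℂ) * a).im = 0 := by simp
  have hre : ((c : ℂ) * a).re = c * a := by simp
  rw [Complex.div_re, him, hre]
  simp only [zero_mul, zero_div, add_zero]
  rw [div_le_iff₀ hns]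
  have hwreb : b ≤ (z + (b : ℂ)).re := by rw [hwre]; linarith
  nlinarith [mul_le_mul_of_nonneg_left hns' ha, hwre',
    mul_le_mul_of_nonneg_right hc (mul_nonneg ha hwre'.le),
    mul_le_mul_of_nonneg_right hwreb (mul_nonneg ha hwre'.le)]

theorem stmt11 (n : ℕ) (D : ℝ) (a b c : Fin n → ℝ)
    (hD : 0 < D) (ha : ∀ i, 0 ≤ a i) (hb : ∀ i, 0 < b i) (hc : ∀ i, c i ≤ b i)
    (A : Matrix (Unit ⊕ Fin n) (Unit ⊕ Fin n) ℝ)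
    (hA : ∀ i j, A i j =
      match i, j with
      | Sum.inl _, Sum.inl _ => -D - ∑ k, a k
      | Sum.inl _, Sum.inr j => c j
      | Sum.inr i, Sum.inl _ => a i
      | Sum.inr i, Sum.inr j => if i = j then -b i else 0) :
    ∀ z ∈ spectrum ℂ (A.map (algebraMap ℝ ℂ)), z.re < 0 := by
  intro z hz
  by_contra hzre
  push_neg at hzre
  -- get an eigenvector
  rw [← AlgEquiv.spectrum_eq (toLinAlgEquiv <| Pi.basisFun ℂ (Unit ⊕ Fin n)),
    ← Module.End.hasEigenvalue_iff_mem_spectrum] at hz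
  obtain ⟨v, hv⟩ := hz.exists_hasEigenvector
  have hmul : (A.map (algebraMap ℝ ℂ)).mulVec v = z • v := by
    have h : Matrix.toLin (Pi.basisFun ℂ (Unit ⊕ Fin n)) (Pi.basisFun ℂ (Unit ⊕ Fin n))
        (A.map (algebraMap ℝ ℂ)) v = z • v := hv.apply_eq_smul
    rw [Matrix.toLin_eq_toLin'] at h
    simpa [Matrix.toLin'_apply] using h
  have hvne := hv.2
  set x0 : ℂ := v (Sum.inl ()) with hx0def
  -- z + b i ≠ 0
  have hzb : ∀ i, z + (b i : ℂ) ≠ 0 := by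
    intro i h
    have : (z + (b i : ℂ)).re = 0 := by rw [h]; simp
    simp only [Complex.add_re, Complex.ofReal_re] at this
    have := hb i; linarith
  -- row equations
  have hrow : ∀ i, (A.map (algebraMap ℝ ℂ)).mulVec v i = ∑ j, ((A i j : ℂ)) * v j := by
    intro i
    simp [Matrix.mulVec, dotProduct, Matrix.map_apply, Complex.coe_algebraMap]
  have hrow_inr : ∀ i : Fin n, v (Sum.inr i) = (a i : ℂ) * x0 / (z + b i) := by
    intro i
    have h1 := congrFun hmul (Sum.inr i)
    rw [hrow] at h1
    rw [Fintype.sum_sum_type] at h1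
    simp only [hA, Finset.univ_unique, Finset.sum_singleton] at h1
    have h2 : ∑ j : Fin n, ((if i = j then -b i else 0 : ℝ) : ℂ) * v (Sum.inr j)
        = -(b i : ℂ) * v (Sum.inr i) := by
      rw [Finset.sum_eq_single i]
      · simp
      · intro j _ hj; simp [Ne.symm hj]
      · simp
    rw [h2] at h1
    simp only [Pi.smul_apply, smul_eq_mul,
      show (Sum.inl (default : Unit) : Unit ⊕ Fin n) = Sum.inl () from rfl] at h1
    rw [← hx0def] at h1
    rw [eq_div_iff (hzb i)]
    linear_combination -h1
  -- x0 ≠ 0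
  have hx0 : x0 ≠ 0 := by
    intro h
    apply hvne
    funext i
    cases i with
    | inl u => cases u; exact h
    | inr i => rw [hrow_inr i, h]; simp
  -- row inl
  have h1 := congrFun hmul (Sum.inl ())
  rw [hrow] at h1
  rw [Fintype.sum_sum_type] at h1
  simp only [hA, Finset.univ_unique, Finset.sum_singleton] at h1
  simp only [Pi.smul_apply, smul_eq_mul,
    show (Sum.inl (default : Unit) : Unit ⊕ Fin n) = Sum.inl () from rfl] at h1
  rw [← hx0def] at h1
  have hcast : ((-D - ∑ k, a k : ℝ) : ℂ) = -(D : ℂ) - ∑ k, (a k : ℂ) := by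
    push_cast; ring
  rw [hcast] at h1
  have hkey : z + (D : ℂ) + (∑ k, (a k : ℂ)) = ∑ j, (c j : ℂ) * a j / (z + b j) := by
    have h2 : ∑ j, ((c j : ℝ) : ℂ) * v (Sum.inr j) = x0 * ∑ j, (c j : ℂ) * a j / (z + b j) := by
      rw [Finset.mul_sum]
      apply Finset.sum_congr rfl
      intro j _
      rw [hrow_inr j]
      field_simp
    rw [h2] at h1
    have h3 : (z + (D : ℂ) + (∑ k, (a k : ℂ))) * x0
        = (∑ j, (c j : ℂ) * a j / (z + b j)) * x0 := by
      linear_combination -h1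
    exact mul_right_cancel₀ hx0 h3
  -- take real parts
  have hre := congrArg Complex.re hkey
  simp only [Complex.add_re, Complex.ofReal_re, Complex.re_sum] at hre
  have hbound : ∑ j, ((c j : ℂ) * a j / (z + b j)).re ≤ ∑ j, a j := by
    apply Finset.sum_le_sum
    intro j _
    exact key_re_bound z (a j) (b j) (c j) hzre (ha j) (hb j) (hc j)
  linarith [hre, hbound]
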